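/- arXiv:2108.08056 — 3 statements merged into one kernel-verified Lean document; each statement's English description precedes it below -/
import Mathlib

section
/- Let λ, b ∈ ℝ with λ ∉ 2ℕ₊ (λ not a positive even integer) and λ ≠ 2. If z₁ and z₂ are two solutions of z' = λ z/r + b r on (0, ε) each of the form zᵢ(r) = gᵢ(r²) for analytic functions gᵢ with gᵢ(0) = 0, then z₁ = z₂ on (0, ε). -/
open Set Filter Topology

set_option maxHeartbeats 1000000

/-- Under the non-resonance condition λ ∉ 2ℕ₊ and λ ≠ 2, admissible
solutions (of the form g(r²) with g analytic, g(0)=0) of z' = λ z/r + b r on (0,ε)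
are unique. -/
theorem stmt2 (lam b ε : ℝ) (hε : 0 < ε)
    (hres : ∀ k : ℕ, 0 < k → lam ≠ 2 * k) (hlam : lam ≠ 2)
    (z₁ z₂ g₁ g₂ : ℝ → ℝ)
    (hz₁ : ∀ r ∈ Set.Ioo (0:ℝ) ε, HasDerivAt z₁ (lam * z₁ r / r + b * r) r)
    (hz₂ : ∀ r ∈ Set.Ioo (0:ℝ) ε, HasDerivAt z₂ (lam * z₂ r / r + b * r) r)
    (hg₁ : AnalyticOnNhd ℝ g₁ (Set.Ioo (-ε) ε)) (hg₁0 : g₁ 0 = 0)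
    (hg₂ : AnalyticOnNhd ℝ g₂ (Set.Ioo (-ε) ε)) (hg₂0 : g₂ 0 = 0)
    (heq₁ : ∀ r ∈ Set.Ioo (0:ℝ) ε, z₁ r = g₁ (r ^ 2))
    (heq₂ : ∀ r ∈ Set.Ioo (0:ℝ) ε, z₂ r = g₂ (r ^ 2)) :
    ∀ r ∈ Set.Ioo (0:ℝ) ε, z₁ r = z₂ r := by
  set g : ℝ → ℝ := fun s => g₁ s - g₂ s with hgdef
  have hg : AnalyticOnNhd ℝ g (Set.Ioo (-ε) ε) := hg₁.sub hg₂
  set δ : ℝ := min 1 ε with hδdef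
  have hδpos : 0 < δ := lt_min one_pos hε
  have hδ1 : δ ≤ 1 := min_le_left _ _
  have hδε : δ ≤ ε := min_le_right _ _
  have hsq : ∀ r ∈ Set.Ioo (0:ℝ) δ, r ^ 2 ∈ Set.Ioo (0:ℝ) ε := by
    rintro r ⟨hr0, hrδ⟩
    have h1 : r < 1 := lt_of_lt_of_le hrδ hδ1
    have h2 : r < ε := lt_of_lt_of_le hrδ hδε
    constructor
    · positivity
    · nlinarith
  -- Step A: the functional equation for g on (0, δ²)
  have key : ∀ r ∈ Set.Ioo (0:ℝ) δ,
      lam * g (r ^ 2) = 2 * r ^ 2 * deriv g (r ^ 2) := by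
    rintro r ⟨hr0, hrδ⟩
    have hrε : r ∈ Set.Ioo (0:ℝ) ε := ⟨hr0, lt_of_lt_of_le hrδ hδε⟩
    have hr2 : r ^ 2 ∈ Set.Ioo (0:ℝ) ε := hsq r ⟨hr0, hrδ⟩
    have hr2' : r ^ 2 ∈ Set.Ioo (-ε) ε := ⟨by nlinarith [hr2.1], hr2.2⟩
    have hd1 : DifferentiableAt ℝ g₁ (r ^ 2) := (hg₁ _ hr2').differentiableAt
    have hd2 : DifferentiableAt ℝ g₂ (r ^ 2) := (hg₂ _ hr2').differentiableAt
    have hpow : HasDerivAt (fun x : ℝ => x ^ 2) (2 * r) r := by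
      simpa using hasDerivAt_pow 2 r
    have comp1 : HasDerivAt (fun x : ℝ => g₁ (x ^ 2)) (deriv g₁ (r ^ 2) * (2 * r)) r :=
      HasDerivAt.comp r hd1.hasDerivAt hpow
    have comp2 : HasDerivAt (fun x : ℝ => g₂ (x ^ 2)) (deriv g₂ (r ^ 2) * (2 * r)) r :=
      HasDerivAt.comp r hd2.hasDerivAt hpow
    have e1 : z₁ =ᶠ[𝓝 r] fun x : ℝ => g₁ (x ^ 2) := by
      filter_upwards [isOpen_Ioo.mem_nhds hrε] with x hx
      exact heq₁ x hx
    have e2 : z₂ =ᶠ[𝓝 r] fun x : ℝ => g₂ (x ^ 2) := by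
      filter_upwards [isOpen_Ioo.mem_nhds hrε] with x hx
      exact heq₂ x hx
    have c1 : HasDerivAt z₁ (deriv g₁ (r ^ 2) * (2 * r)) r := comp1.congr_of_eventuallyEq e1
    have c2 : HasDerivAt z₂ (deriv g₂ (r ^ 2) * (2 * r)) r := comp2.congr_of_eventuallyEq e2
    have u1 : lam * z₁ r / r + b * r = deriv g₁ (r ^ 2) * (2 * r) := (hz₁ r hrε).unique c1
    have u2 : lam * z₂ r / r + b * r = deriv g₂ (r ^ 2) * (2 * r) := (hz₂ r hrε).unique c2
    have hz1r := heq₁ r hrε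
    have hz2r := heq₂ r hrε
    rw [hz1r] at u1
    rw [hz2r] at u2
    have hrne : r ≠ 0 := ne_of_gt hr0
    have hdg : deriv g (r ^ 2) = deriv g₁ (r ^ 2) - deriv g₂ (r ^ 2) := deriv_sub hd1 hd2
    have hgval : g (r ^ 2) = g₁ (r ^ 2) - g₂ (r ^ 2) := rfl
    rw [hgval, hdg]
    field_simp at u1 u2
    nlinarith [u1, u2]
  -- Step B: extend the functional equation to all of (-ε, ε) by the identity principle
  have hδ2ε : δ ^ 2 ≤ ε := by nlinarith
  have hFanal : AnalyticOnNhd ℝ (fun s => lam * g s - 2 * s * deriv g s) (Set.Ioo (-ε) ε) :=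
    (analyticOnNhd_const.mul hg).sub
      ((analyticOnNhd_const.mul analyticOnNhd_id).mul hg.deriv)
  have hs₀mem : δ ^ 2 / 2 ∈ Set.Ioo (0:ℝ) (δ ^ 2) := by constructor <;> nlinarith
  have hs₀mem' : δ ^ 2 / 2 ∈ Set.Ioo (-ε) ε := by constructor <;> nlinarith
  have hzeroev : (fun s => lam * g s - 2 * s * deriv g s) =ᶠ[𝓝 (δ ^ 2 / 2)] 0 := by
    filter_upwards [isOpen_Ioo.mem_nhds hs₀mem] with s hs
    have hs0 : 0 < s := hs.1
    have hrs : Real.sqrt s ∈ Set.Ioo (0:ℝ) δ := by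
      constructor
      · exact Real.sqrt_pos.mpr hs0
      · exact (Real.sqrt_lt' hδpos).mpr hs.2
    have := key _ hrs
    rw [Real.sq_sqrt hs0.le] at this
    simp [this]
  have hFzero : Set.EqOn (fun s => lam * g s - 2 * s * deriv g s) 0 (Set.Ioo (-ε) ε) :=
    hFanal.eqOn_zero_of_preconnected_of_eventuallyEq_zero (convex_Ioo _ _).isPreconnected
      hs₀mem' hzeroev
  have keyall : ∀ s ∈ Set.Ioo (-ε) ε, lam * g s = 2 * s * deriv g s := by
    intro s hs
    have := hFzero hs
    simp only [Pi.zero_apply] at this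
    linarith [this]
  -- Step C: g vanishes in a neighborhood of 0
  have h0mem : (0:ℝ) ∈ Set.Ioo (-ε) ε := ⟨by linarith, hε⟩
  have hA : AnalyticAt ℝ g 0 := hg 0 h0mem
  have hg0 : g 0 = 0 := by simp [hgdef, hg₁0, hg₂0]
  have gzero : ∀ᶠ s in 𝓝 (0:ℝ), g s = 0 := by
    by_contra hcon
    obtain ⟨n, h, hh_an, hh0, hheq⟩ := hA.exists_eventuallyEq_pow_smul_nonzero_iff.mpr hcon
    have hheq2 : g =ᶠ[𝓝 (0:ℝ)] fun z => z ^ n * h z := by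
      filter_upwards [hheq] with z hz
      simpa using hz
    have hn1 : 1 ≤ n := by
      by_contra hn
      have hn0 : n = 0 := by omega
      have := hheq2.self_of_nhds
      rw [hn0, hg0] at this
      simp at this
      exact hh0 this.symm
    have hdh : ∀ᶠ s in 𝓝 (0:ℝ), AnalyticAt ℝ h s := hh_an.eventually_analyticAt
    have hkeyev : ∀ᶠ s in 𝓝 (0:ℝ), lam * g s = 2 * s * deriv g s := by
      filter_upwards [isOpen_Ioo.mem_nhds h0mem] with s hs
      exact keyall s hs
    have hderiv_eq : deriv g =ᶠ[𝓝 (0:ℝ)] deriv (fun z => z ^ n * h z) := hheq2.deriv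
    have main : ∀ᶠ s in 𝓝 (0:ℝ), s ≠ 0 →
        lam * h s - 2 * (n:ℝ) * h s - 2 * s * deriv h s = 0 := by
      filter_upwards [hkeyev, hheq2, hderiv_eq, hdh] with s h1 h2 h3 h4
      intro hs0
      have hdRHS : deriv (fun z : ℝ => z ^ n * h z) s
          = (n : ℝ) * s ^ (n - 1) * h s + s ^ n * deriv h s :=
        ((hasDerivAt_pow n s).mul h4.differentiableAt.hasDerivAt).deriv
      rw [h2, h3, hdRHS] at h1
      have hpw : s * s ^ (n - 1) = s ^ n := by
        conv_rhs => rw [show n = (n - 1) + 1 by omega]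
        rw [pow_succ']
      have E : s ^ n * (lam * h s - 2 * (n:ℝ) * h s - 2 * s * deriv h s) = 0 := by
        linear_combination h1 + 2 * (n:ℝ) * h s * hpw
      rcases mul_eq_zero.mp E with hE | hE
      · exact absurd hE (pow_ne_zero n hs0)
      · exact hE
    have hhc : ContinuousAt h 0 := hh_an.continuousAt
    have hs_an : AnalyticOnNhd ℝ h {x | AnalyticAt ℝ h x} := fun x hx => hx
    have hdc : ContinuousAt (deriv h) 0 := (hs_an.deriv 0 hh_an).continuousAt
    have hcont : ContinuousAt (fun s : ℝ =>
        lam * h s - 2 * (n:ℝ) * h s - 2 * s * deriv h s) 0 :=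
      ((continuousAt_const.mul hhc).sub (continuousAt_const.mul hhc)).sub
        ((continuousAt_const.mul continuousAt_id).mul hdc)
    have hφ0 : lam * h 0 - 2 * (n:ℝ) * h 0 - 2 * 0 * deriv h 0 = 0 := by
      have t1 : Tendsto (fun s : ℝ => lam * h s - 2 * (n:ℝ) * h s - 2 * s * deriv h s)
          (𝓝[≠] (0:ℝ)) (𝓝 (lam * h 0 - 2 * (n:ℝ) * h 0 - 2 * 0 * deriv h 0)) :=
        hcont.continuousWithinAt.tendsto
      have t2 : Tendsto (fun s : ℝ => lam * h s - 2 * (n:ℝ) * h s - 2 * s * deriv h s)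
          (𝓝[≠] (0:ℝ)) (𝓝 0) := by
        apply Tendsto.congr' _ tendsto_const_nhds
        filter_upwards [main.filter_mono nhdsWithin_le_nhds, self_mem_nhdsWithin] with s hs hs0
        exact (hs hs0).symm
      exact tendsto_nhds_unique t1 t2
    have hlameq : lam = 2 * (n:ℝ) := by
      have hfac : (lam - 2 * (n:ℝ)) * h 0 = 0 := by linarith [hφ0]
      rcases mul_eq_zero.mp hfac with hE | hE
      · linarith
      · exact absurd hE hh0
    exact hres n hn1 hlameq
  -- Step D: g vanishes on all of (-ε, ε)
  have hEq : Set.EqOn g 0 (Set.Ioo (-ε) ε) :=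
    hg.eqOn_zero_of_preconnected_of_eventuallyEq_zero (convex_Ioo _ _).isPreconnected
      h0mem gzero
  have hwsmall : ∀ r ∈ Set.Ioo (0:ℝ) δ, z₁ r = z₂ r := by
    rintro r hr
    have hrε : r ∈ Set.Ioo (0:ℝ) ε := ⟨hr.1, lt_of_lt_of_le hr.2 hδε⟩
    have hr2 : r ^ 2 ∈ Set.Ioo (-ε) ε := by
      have := hsq r hr
      exact ⟨by nlinarith [this.1], this.2⟩
    have := hEq hr2
    simp only [Pi.zero_apply, hgdef] at this
    rw [heq₁ r hrε, heq₂ r hrε]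
    linarith [this]
  -- Step E: extend to (0, ε) via the ODE
  intro r hr
  rcases lt_or_ge r δ with hcase | hcase
  · exact hwsmall r ⟨hr.1, hcase⟩
  · set w : ℝ → ℝ := fun t => z₁ t - z₂ t with hwdef
    set u : ℝ → ℝ := fun t => w t * t ^ (-lam) with hudef
    have hw : ∀ t ∈ Set.Ioo (0:ℝ) ε, HasDerivAt w (lam * w t / t) t := by
      intro t ht
      have := (hz₁ t ht).sub (hz₂ t ht)
      convert this using 1
      iterate 3 rfl
      simp only [hwdef]
      ring
    have hu : ∀ t ∈ Set.Ioo (0:ℝ) ε, HasDerivAt u 0 t := by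
      intro t ht
      have ht0 : (0:ℝ) < t := ht.1
      have hrp : HasDerivAt (fun x : ℝ => x ^ (-lam)) (-lam * t ^ (-lam - 1)) t :=
        Real.hasDerivAt_rpow_const (Or.inl (ne_of_gt ht0))
      have := (hw t ht).mul hrp
      convert this using 1
      iterate 3 rfl
      rw [show -lam - 1 = -lam - 1 from rfl, Real.rpow_sub ht0, Real.rpow_one]
      field_simp
      ring
    set r₀ : ℝ := δ / 2 with hr₀def
    have hr₀mem : r₀ ∈ Set.Ioo (0:ℝ) δ := ⟨by linarith, by linarith⟩
    have hr₀r : r₀ ≤ r := by linarith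
    have hIcc : Set.Icc r₀ r ⊆ Set.Ioo (0:ℝ) ε := by
      rintro t ⟨h1, h2⟩
      exact ⟨by linarith, lt_of_le_of_lt h2 hr.2⟩
    have hcont : ContinuousOn u (Set.Icc r₀ r) := fun t ht =>
      (hu t (hIcc ht)).continuousAt.continuousWithinAt
    have hderiv : ∀ t ∈ Set.Ico r₀ r, HasDerivWithinAt u 0 (Set.Ici t) t := fun t ht =>
      (hu t (hIcc ⟨ht.1, ht.2.le⟩)).hasDerivWithinAt
    have hconst := constant_of_has_deriv_right_zero hcont hderiv r (Set.right_mem_Icc.mpr hr₀r)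
    have hur₀ : u r₀ = 0 := by
      simp only [hudef, hwdef]
      rw [hwsmall r₀ hr₀mem]
      ring
    rw [hur₀] at hconst
    have hrpne : r ^ (-lam) ≠ 0 := (Real.rpow_pos_of_pos hr.1 _).ne'
    have hwr : w r = 0 := by
      rcases mul_eq_zero.mp hconst with hE | hE
      · exact hE
      · exact absurd hE hrpne
    simpa [hwdef, sub_eq_zero] using hwr
end

section
/- Let B : ℝ^{n+1} × ℝ^{n+1} → ℝⁿ be bilinear, c̃ ∈ ℝⁿ, and f̂ real-analytic with f̂(y) = O(|y|³). Define f̃(x̃, ρ) := f̂(ρ(x̃ + c̃), ρ)/ρ + ρ B((x̃, 0) + 2(c̃, 1), (x̃, 0)) for ρ ≠ 0 (extended by 0 at ρ = 0). Then f̃ extends to a function satisfying f̃(ỹ) = O(|ỹ|²) as ỹ = (x̃, ρ) → 0. -/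
set_option maxHeartbeats 1000000

/-- The new nonlinearity
f̃(x̃,ρ) = f̂(ρ(x̃+c̃),ρ)/ρ + ρ B((x̃,0)+2(c̃,1),(x̃,0)) (extended by 0 at ρ = 0)
is O(|ỹ|²) as ỹ = (x̃,ρ) → 0. -/
theorem stmt8 (n : ℕ)
    (B : (Fin (n + 1) → ℝ) →ₗ[ℝ] (Fin (n + 1) → ℝ) →ₗ[ℝ] (Fin n → ℝ))
    (c : Fin n → ℝ) (fhat : (Fin (n + 1) → ℝ) → Fin n → ℝ)
    (hfa : ∀ y, AnalyticAt ℝ fhat y)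
    (hO3 : ∃ C δ : ℝ, 0 < δ ∧ ∀ y : Fin (n + 1) → ℝ, ‖y‖ < δ → ‖fhat y‖ ≤ C * ‖y‖ ^ 3) :
    ∃ C δ : ℝ, 0 < δ ∧ ∀ (x : Fin n → ℝ) (ρ : ℝ),
      ‖(Fin.snoc x ρ : Fin (n + 1) → ℝ)‖ < δ →
      ‖(if ρ = 0 then (0 : Fin n → ℝ)
        else ρ⁻¹ • fhat (Fin.snoc (ρ • (x + c)) ρ : Fin (n + 1) → ℝ)
          + ρ • B ((Fin.snoc x 0 : Fin (n + 1) → ℝ)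
              + (2 : ℝ) • (Fin.snoc c 1 : Fin (n + 1) → ℝ))
            (Fin.snoc x 0 : Fin (n + 1) → ℝ))‖
        ≤ C * ‖(Fin.snoc x ρ : Fin (n + 1) → ℝ)‖ ^ 2 := by
  classical
  obtain ⟨C₀, δ₀, hδ₀, hb⟩ := hO3
  obtain ⟨L, hLapp⟩ : ∃ L : (Fin (n+1) → ℝ) →L[ℝ] (Fin (n+1) → ℝ) →L[ℝ] (Fin n → ℝ),
      ∀ v w, L v w = B v w :=
    ⟨LinearMap.toContinuousLinearMap
      ((LinearMap.toContinuousLinearMap :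
        ((Fin (n+1) → ℝ) →ₗ[ℝ] (Fin n → ℝ)) ≃ₗ[ℝ] _).toLinearMap ∘ₗ B),
      by intro v w; simp⟩
  set K₁ := ‖(Fin.snoc c 1 : Fin (n+1) → ℝ)‖ with hK₁def
  have hK₁0 : (0:ℝ) ≤ K₁ := norm_nonneg _
  have h1K : (0:ℝ) < 1 + K₁ := by linarith
  refine ⟨max C₀ 0 * (1+K₁)^3 + ‖L‖ * (1 + 2*K₁), min 1 (δ₀/(1+K₁)),
    lt_min one_pos (div_pos hδ₀ h1K), ?_⟩
  intro x ρ h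
  set y := (Fin.snoc x ρ : Fin (n+1) → ℝ) with hydef
  have hρ_le : |ρ| ≤ ‖y‖ := by
    have := norm_le_pi_norm y (Fin.last n)
    simpa [hydef, Real.norm_eq_abs] using this
  have hx0 : ‖(Fin.snoc x 0 : Fin (n+1) → ℝ)‖ ≤ ‖y‖ := by
    refine (pi_norm_le_iff_of_nonneg (norm_nonneg y)).mpr ?_
    intro i
    refine Fin.lastCases ?_ ?_ i
    · simp
    · intro j
      have := norm_le_pi_norm y (Fin.castSucc j)
      simpa [hydef] using this
  have hN1 : ‖y‖ < 1 := lt_of_lt_of_le h (min_le_left _ _)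
  have hN2 : ‖y‖ < δ₀/(1+K₁) := lt_of_lt_of_le h (min_le_right _ _)
  have hN0 : (0:ℝ) ≤ ‖y‖ := norm_nonneg _
  split_ifs with hρ
  · have : (0:ℝ) ≤ (max C₀ 0 * (1+K₁)^3 + ‖L‖ * (1 + 2*K₁)) * ‖y‖^2 := by positivity
    simpa using this
  · -- rewrite the fhat argument
    have hz : (Fin.snoc (ρ • (x + c)) ρ : Fin (n+1) → ℝ)
        = ρ • (Fin.snoc (x + c) 1 : Fin (n+1) → ℝ) := by
      funext i
      refine Fin.lastCases ?_ ?_ i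
      · simp
      · intro j; simp [mul_add]
    have hwsplit : (Fin.snoc (x + c) 1 : Fin (n+1) → ℝ)
        = (Fin.snoc x 0 : Fin (n+1) → ℝ) + (Fin.snoc c 1 : Fin (n+1) → ℝ) := by
      funext i
      refine Fin.lastCases ?_ ?_ i <;> simp
    have hw : ‖(Fin.snoc (x + c) 1 : Fin (n+1) → ℝ)‖ ≤ ‖y‖ + K₁ := by
      rw [hwsplit]; exact le_trans (norm_add_le _ _) (by linarith [hx0])
    have hwle : ‖(Fin.snoc (x + c) 1 : Fin (n+1) → ℝ)‖ ≤ 1 + K₁ := by linarith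
    have hznorm : ‖(Fin.snoc (ρ • (x + c)) ρ : Fin (n+1) → ℝ)‖
        = |ρ| * ‖(Fin.snoc (x + c) 1 : Fin (n+1) → ℝ)‖ := by
      rw [hz, norm_smul, Real.norm_eq_abs]
    have hzsmall : ‖(Fin.snoc (ρ • (x + c)) ρ : Fin (n+1) → ℝ)‖ < δ₀ := by
      rw [hznorm]
      calc |ρ| * ‖(Fin.snoc (x + c) 1 : Fin (n+1) → ℝ)‖ ≤ ‖y‖ * (1 + K₁) := by
            apply mul_le_mul hρ_le hwle (norm_nonneg _) hN0
        _ < δ₀ := by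
            have := (lt_div_iff₀ h1K).mp hN2; linarith
    have hfz := hb _ hzsmall
    have hρpos : (0:ℝ) < |ρ| := abs_pos.mpr hρ
    -- term 1 bound
    have ht1 : ‖ρ⁻¹ • fhat (Fin.snoc (ρ • (x + c)) ρ : Fin (n+1) → ℝ)‖
        ≤ max C₀ 0 * (1+K₁)^3 * ‖y‖^2 := by
      rw [norm_smul, Real.norm_eq_abs, abs_inv]
      have h1 : ‖fhat (Fin.snoc (ρ • (x + c)) ρ : Fin (n+1) → ℝ)‖
          ≤ max C₀ 0 * (|ρ| * (1+K₁))^3 := by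
        refine le_trans hfz ?_
        have hle : ‖(Fin.snoc (ρ • (x + c)) ρ : Fin (n+1) → ℝ)‖ ≤ |ρ| * (1+K₁) := by
          rw [hznorm]; exact mul_le_mul_of_nonneg_left hwle (abs_nonneg ρ)
        calc C₀ * ‖(Fin.snoc (ρ • (x + c)) ρ : Fin (n+1) → ℝ)‖^3
            ≤ max C₀ 0 * ‖(Fin.snoc (ρ • (x + c)) ρ : Fin (n+1) → ℝ)‖^3 := by
              apply mul_le_mul_of_nonneg_right (le_max_left _ _) (by positivity)
          _ ≤ max C₀ 0 * (|ρ| * (1+K₁))^3 := by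
              apply mul_le_mul_of_nonneg_left (pow_le_pow_left₀ (norm_nonneg _) hle 3)
                (le_max_right _ _)
      calc |ρ|⁻¹ * ‖fhat (Fin.snoc (ρ • (x + c)) ρ : Fin (n+1) → ℝ)‖
          ≤ |ρ|⁻¹ * (max C₀ 0 * (|ρ| * (1+K₁))^3) := by
            apply mul_le_mul_of_nonneg_left h1 (by positivity)
        _ = max C₀ 0 * (1+K₁)^3 * |ρ|^2 := by
            have hc : |ρ|⁻¹ * |ρ| = 1 := inv_mul_cancel₀ hρpos.ne'
            linear_combination (max C₀ 0 * (1+K₁)^3 * |ρ|^2) * hc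
        _ ≤ max C₀ 0 * (1+K₁)^3 * ‖y‖^2 := by
            apply mul_le_mul_of_nonneg_left ?_ (by positivity)
            exact pow_le_pow_left₀ (abs_nonneg _) hρ_le 2
    -- term 2 bound
    have ht2 : ‖ρ • B ((Fin.snoc x 0 : Fin (n+1) → ℝ)
          + (2:ℝ) • (Fin.snoc c 1 : Fin (n+1) → ℝ)) (Fin.snoc x 0 : Fin (n+1) → ℝ)‖
        ≤ ‖L‖ * (1 + 2*K₁) * ‖y‖^2 := by
      rw [← hLapp, norm_smul, Real.norm_eq_abs]
      have hop := L.le_opNorm₂ ((Fin.snoc x 0 : Fin (n+1) → ℝ)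
          + (2:ℝ) • (Fin.snoc c 1 : Fin (n+1) → ℝ)) (Fin.snoc x 0 : Fin (n+1) → ℝ)
      have hv : ‖(Fin.snoc x 0 : Fin (n+1) → ℝ)
          + (2:ℝ) • (Fin.snoc c 1 : Fin (n+1) → ℝ)‖ ≤ 1 + 2*K₁ := by
        refine le_trans (norm_add_le _ _) ?_
        rw [norm_smul]
        simp only [Real.norm_eq_abs]
        have : |(2:ℝ)| = 2 := by norm_num
        rw [this]
        linarith
      have hL0 : (0:ℝ) ≤ ‖L‖ := ContinuousLinearMap.opNorm_nonneg L
      calc |ρ| * ‖L ((Fin.snoc x 0 : Fin (n+1) → ℝ)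
            + (2:ℝ) • (Fin.snoc c 1 : Fin (n+1) → ℝ)) (Fin.snoc x 0 : Fin (n+1) → ℝ)‖
          ≤ |ρ| * (‖L‖ * (1 + 2*K₁) * ‖y‖) := by
            apply mul_le_mul_of_nonneg_left ?_ (abs_nonneg _)
            refine le_trans hop ?_
            have := mul_le_mul (mul_le_mul_of_nonneg_left hv hL0) hx0 (norm_nonneg _)
              (by positivity)
            linarith [this]
        _ ≤ ‖y‖ * (‖L‖ * (1 + 2*K₁) * ‖y‖) := by
            apply mul_le_mul_of_nonneg_right hρ_le (by positivity)
        _ = ‖L‖ * (1 + 2*K₁) * ‖y‖^2 := by ring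
    calc ‖ρ⁻¹ • fhat (Fin.snoc (ρ • (x + c)) ρ : Fin (n+1) → ℝ)
          + ρ • B ((Fin.snoc x 0 : Fin (n+1) → ℝ)
              + (2:ℝ) • (Fin.snoc c 1 : Fin (n+1) → ℝ)) (Fin.snoc x 0 : Fin (n+1) → ℝ)‖
        ≤ _ + _ := norm_add_le _ _
      _ ≤ max C₀ 0 * (1+K₁)^3 * ‖y‖^2 + ‖L‖ * (1 + 2*K₁) * ‖y‖^2 := add_le_add ht1 ht2
      _ = (max C₀ 0 * (1+K₁)^3 + ‖L‖ * (1 + 2*K₁)) * ‖y‖^2 := by ring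
end

section
/- For m ∈ {2, 3} and all u > 0, λ₄(u; μₘ) = (1/4)(-5 + √(48m/(1 + u^{-m}) + 9)) < 2. Hence the non-resonance condition λ₄ ∉ 2ℕ₊ holds for all h₀ > 0, z₀ < 0 when μ(Ψ) = 1 + Ψ² or μ(Ψ) = 1 + Ψ³. -/
/-- For m ∈ {2,3} and all h₀ > 0, z₀ < 0 (u = h₀z₀²),
λ₄(u; μₘ) < 2; hence the non-resonance condition λ₄ ∉ 2ℕ₊ holds. -/
theorem stmt18 (m : ℕ) (hm : m ∈ ({2, 3} : Set ℕ)) :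
    ∀ h₀ > (0:ℝ), ∀ z₀ < (0:ℝ),
      (1/4) * (-5 + Real.sqrt (48 * m / (1 + ((h₀ * z₀ ^ 2) ^ m)⁻¹) + 9)) < 2 ∧
      ∀ k : ℕ, 0 < k →
        (1/4) * (-5 + Real.sqrt (48 * m / (1 + ((h₀ * z₀ ^ 2) ^ m)⁻¹) + 9))
          ≠ 2 * k := by
  intro h₀ hh z₀ hz
  have hz2 : (0:ℝ) < z₀ ^ 2 := by nlinarith
  have hu : (0:ℝ) < h₀ * z₀ ^ 2 := by positivity
  have hum : (0:ℝ) < ((h₀ * z₀ ^ 2) ^ m)⁻¹ := by positivity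
  have hd : (1:ℝ) < 1 + ((h₀ * z₀ ^ 2) ^ m)⁻¹ := by linarith
  have hm3 : (m:ℝ) ≤ 3 := by
    rcases hm with h | h <;> simp_all <;> norm_num
  have hdiv : 48 * (m:ℝ) / (1 + ((h₀ * z₀ ^ 2) ^ m)⁻¹) < 144 := by
    calc 48 * (m:ℝ) / (1 + ((h₀ * z₀ ^ 2) ^ m)⁻¹)
        < 48 * (m:ℝ) / 1 := by
          apply div_lt_div_of_pos_left _ (by norm_num) hd
          have : (2:ℝ) ≤ m := by rcases hm with h | h <;> simp_all <;> norm_num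
          linarith
      _ ≤ 144 := by rw [div_one]; linarith
  have hsq : Real.sqrt (48 * m / (1 + ((h₀ * z₀ ^ 2) ^ m)⁻¹) + 9) < 13 := by
    have : Real.sqrt (48 * m / (1 + ((h₀ * z₀ ^ 2) ^ m)⁻¹) + 9) < Real.sqrt 169 := by
      apply Real.sqrt_lt_sqrt (by positivity) (by linarith)
    have h169 : Real.sqrt 169 = 13 := by
      rw [show (169:ℝ) = 13 ^ 2 by norm_num, Real.sqrt_sq (by norm_num)]
    linarith [this, h169.le, h169.ge]
  have hlt : (1/4) * (-5 + Real.sqrt (48 * m / (1 + ((h₀ * z₀ ^ 2) ^ m)⁻¹) + 9)) < 2 := by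
    nlinarith
  refine ⟨hlt, fun k hk => ?_⟩
  have : (2:ℝ) ≤ 2 * k := by
    have : (1:ℝ) ≤ k := by exact_mod_cast hk
    linarith
  intro heq
  rw [heq] at hlt
  linarith
end
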